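/- For γ = π/(2 arctan(ε T_max L)) with ε > 0, the function h(f_t) = f_t / tan(γ arctan(ε f_t)) on [-T_max L, T_max L] extends continuously at f_t = 0 with value 1/(γε), vanishes at f_t = ±T_max L, and satisfies 0 ≤ h(f_t) ≤ 1/(γε) on the whole interval. -/

import Mathlib

open Real Set Filter Topology

lemma tan_mul_ge' {c x : ℝ} (hc : 1 ≤ c) (hx0 : 0 ≤ x) (hcx : c * x < π / 2) :
    c * Real.tan x ≤ Real.tan (c * x) := by
  rcases hx0.eq_or_lt with rfl | hx0'
  · simp
  have hc0 : (0:ℝ) < c := lt_of_lt_of_le one_pos hc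
  set F : ℝ → ℝ := fun t => Real.tan (c * t) - c * Real.tan t with hF
  have hcos : ∀ t ∈ Set.Icc 0 x, (0 < Real.cos (c * t) ∧ 0 < Real.cos t) := by
    intro t ht
    have h1 : t ≤ c * t := le_mul_of_one_le_left ht.1 hc
    have h2 : c * t ≤ c * x := by nlinarith [ht.2]
    constructor
    · exact Real.cos_pos_of_mem_Ioo ⟨by nlinarith [Real.pi_pos, mul_nonneg hc0.le ht.1], by linarith⟩
    · exact Real.cos_pos_of_mem_Ioo ⟨by nlinarith [Real.pi_pos, ht.1], by linarith⟩
  have hderiv : ∀ t ∈ Set.Icc 0 x,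
      HasDerivAt F (c * (1 / Real.cos (c * t) ^ 2) - c * (1 / Real.cos t ^ 2)) t := by
    intro t ht
    obtain ⟨h1, h2⟩ := hcos t ht
    have d1 : HasDerivAt (fun t => Real.tan (c * t)) ((1 / Real.cos (c * t) ^ 2) * c) t := by
      have : HasDerivAt (fun y : ℝ => c * y) c t := by
        simpa using (hasDerivAt_id t).const_mul c
      exact (Real.hasDerivAt_tan h1.ne').comp t this
    have d2 : HasDerivAt (fun t => c * Real.tan t) (c * (1 / Real.cos t ^ 2)) t :=
      (Real.hasDerivAt_tan h2.ne').const_mul c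
    have := d1.sub d2
    exact this.congr_deriv (by ring)
  have hmono : MonotoneOn F (Set.Icc 0 x) := by
    apply monotoneOn_of_deriv_nonneg (convex_Icc 0 x)
    · intro t ht
      exact (hderiv t ht).continuousAt.continuousWithinAt
    · intro t ht
      rw [interior_Icc] at ht
      exact (hderiv t (Set.mem_Icc_of_Ioo ht)).differentiableAt.differentiableWithinAt
    · intro t ht
      rw [interior_Icc] at ht
      rw [(hderiv t (Set.mem_Icc_of_Ioo ht)).deriv]
      obtain ⟨h1, h2⟩ := hcos t (Set.mem_Icc_of_Ioo ht)
      have hle : Real.cos (c * t) ≤ Real.cos t := by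
        apply Real.cos_le_cos_of_nonneg_of_le_pi ht.1.le
        · nlinarith [Real.pi_pos, ht.2]
        · exact le_mul_of_one_le_left ht.1.le hc
      have : Real.cos (c * t) ^ 2 ≤ Real.cos t ^ 2 := by nlinarith
      have h3 : 1 / Real.cos t ^ 2 ≤ 1 / Real.cos (c * t) ^ 2 :=
        one_div_le_one_div_of_le (by positivity) this
      nlinarith
  have h0 : F 0 ≤ F x := hmono ⟨le_refl 0, hx0⟩ ⟨hx0, le_refl x⟩ hx0
  simp [hF] at h0
  linarith

lemma slope_lim {f : ℝ → ℝ} {d : ℝ} (hf : HasDerivAt f d 0) (h0 : f 0 = 0) :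
    Filter.Tendsto (fun y => f y / y) (nhdsWithin 0 {(0:ℝ)}ᶜ) (nhds d) := by
  have h1 := hasDerivAt_iff_tendsto_slope.1 hf
  have : (slope f 0) = fun y => f y / y := by
    funext y; simp [slope_def_field, h0]
  rwa [this] at h1

theorem h_continuous_and_bounded
    (Tmax L ε : ℝ) (hT : 0 < Tmax) (hL : 0 < L) (hε : 0 < ε)
    (γ : ℝ) (hγ : γ = π / (2 * Real.arctan (ε * (Tmax * L))))
    (h : ℝ → ℝ)
    (hdef : ∀ ft : ℝ, h ft =
      if ft = 0 then 1 / (γ * ε) else ft / Real.tan (γ * Real.arctan (ε * ft))) :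
    ContinuousOn h (Set.Icc (-(Tmax * L)) (Tmax * L)) ∧
    h (Tmax * L) = 0 ∧ h (-(Tmax * L)) = 0 ∧
    (∀ ft ∈ Set.Icc (-(Tmax * L)) (Tmax * L), 0 ≤ h ft ∧ h ft ≤ 1 / (γ * ε)) := by
  have hM : 0 < Tmax * L := mul_pos hT hL
  have ha0 : 0 < Real.arctan (ε * (Tmax * L)) := by
    rw [← Real.arctan_zero]
    exact Real.arctan_strictMono (by positivity)
  have ha0' : Real.arctan (ε * (Tmax * L)) < π / 2 := Real.arctan_lt_pi_div_two _
  have hγpos : 0 < γ := by rw [hγ]; positivity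
  have hγa : γ * Real.arctan (ε * (Tmax * L)) = π / 2 := by
    rw [hγ]; field_simp
  have hγ1 : 1 ≤ γ := by
    rw [hγ, le_div_iff₀ (by positivity)]; linarith
  set u : ℝ → ℝ := fun x => γ * Real.arctan (ε * x) with hu
  have hu_cont : Continuous u := by
    exact continuous_const.mul (Real.continuous_arctan.comp (continuous_const.mul continuous_id))
  have hEven : ∀ x : ℝ, h (-x) = h x := by
    intro x
    rcases eq_or_ne x 0 with rfl | hx
    · simp
    · rw [hdef, hdef, if_neg hx, if_neg (neg_ne_zero.2 hx), mul_neg, Real.arctan_neg,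
        mul_neg, Real.tan_neg, neg_div_neg_eq]
  have hend : h (Tmax * L) = 0 := by
    rw [hdef, if_neg hM.ne', hγa, Real.tan_pi_div_two, div_zero]
  have hend' : h (-(Tmax * L)) = 0 := by rw [hEven]; exact hend
  -- bounds on [0, M]
  have hbound : ∀ x : ℝ, 0 ≤ x → x ≤ Tmax * L → 0 ≤ h x ∧ h x ≤ 1 / (γ * ε) := by
    intro x hx0 hxM
    rcases hx0.eq_or_lt with rfl | hx0'
    · rw [hdef, if_pos rfl]
      exact ⟨by positivity, le_refl _⟩
    rcases hxM.eq_or_lt with rfl | hxM'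
    · rw [hend]
      exact ⟨le_refl _, by positivity⟩
    · have ha : 0 < Real.arctan (ε * x) := by
        rw [← Real.arctan_zero]; exact Real.arctan_strictMono (by positivity)
      have haa : Real.arctan (ε * x) < Real.arctan (ε * (Tmax * L)) :=
        Real.arctan_strictMono (by nlinarith)
      have hγx : γ * Real.arctan (ε * x) < π / 2 := by
        rw [← hγa]; exact (mul_lt_mul_iff_right₀ hγpos).2 haa
      have key := tan_mul_ge' hγ1 ha.le hγx
      rw [Real.tan_arctan] at key
      have htanpos : 0 < Real.tan (γ * Real.arctan (ε * x)) :=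
        lt_of_lt_of_le (by positivity) key
      rw [hdef, if_neg hx0'.ne']
      refine ⟨by positivity, ?_⟩
      have h1 : x / Real.tan (γ * Real.arctan (ε * x)) ≤ x / (γ * (ε * x)) :=
        div_le_div_of_nonneg_left hx0'.le (by positivity) key
      have h2 : x / (γ * (ε * x)) = 1 / (γ * ε) := by
        field_simp
      linarith [h1, h2.le]
  -- continuity at 0
  have hcont0 : ContinuousAt h 0 := by
    rw [← continuousWithinAt_compl_self]
    have h0 : h 0 = 1 / (γ * ε) := by rw [hdef]; simp
    unfold ContinuousWithinAt
    rw [h0]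
    have hu0 : Filter.Tendsto u (𝓝[≠] (0:ℝ)) (𝓝[≠] (0:ℝ)) := by
      apply tendsto_nhdsWithin_of_tendsto_nhds_of_eventually_within
      · have hu00 : u 0 = 0 := by simp [hu]
        have := hu_cont.tendsto 0
        rw [hu00] at this
        exact this.mono_left nhdsWithin_le_nhds
      · filter_upwards [self_mem_nhdsWithin] with y hy
        simp only [Set.mem_compl_iff, Set.mem_singleton_iff] at hy
        intro hc
        apply hy
        have hc0 : γ * Real.arctan (ε * y) = 0 := hc
        have h1 : Real.arctan (ε * y) = 0 := by
          rcases mul_eq_zero.1 hc0 with hh | hh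
          · exact absurd hh hγpos.ne'
          · exact hh
        have h2 := Real.arctan_eq_zero_iff.1 h1
        rcases mul_eq_zero.1 h2 with hh | hh
        · exact absurd hh hε.ne'
        · exact hh
    have harc : Filter.Tendsto (fun y : ℝ => Real.arctan y / y) (𝓝[≠] (0:ℝ)) (𝓝 1) := by
      have := slope_lim (Real.hasDerivAt_arctan 0) Real.arctan_zero
      simpa using this
    have htanlim : Filter.Tendsto (fun y : ℝ => Real.tan y / y) (𝓝[≠] (0:ℝ)) (𝓝 1) := by
      have hd : HasDerivAt Real.tan 1 0 := by
        simpa using Real.hasDerivAt_tan (x := 0) (by simp)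
      exact slope_lim hd Real.tan_zero
    have hmul : Filter.Tendsto (fun y : ℝ => ε * y) (𝓝[≠] (0:ℝ)) (𝓝[≠] (0:ℝ)) := by
      apply tendsto_nhdsWithin_of_tendsto_nhds_of_eventually_within
      · simpa [Pi.mul_def] using ((continuous_const.mul continuous_id).tendsto 0).mono_left
          (nhdsWithin_le_nhds (s := {(0:ℝ)}ᶜ))
      · filter_upwards [self_mem_nhdsWithin] with y hy
        simp only [Set.mem_compl_iff, Set.mem_singleton_iff] at hy
        intro hc
        apply hy
        have hc' : ε * y = 0 := hc
        rcases mul_eq_zero.1 hc' with hh | hh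
        · exact absurd hh hε.ne'
        · exact hh
    have hA : Filter.Tendsto (fun y : ℝ => u y / y) (𝓝[≠] (0:ℝ)) (𝓝 (γ * ε)) := by
      have h1 : Filter.Tendsto (fun y : ℝ => Real.arctan (ε * y) / (ε * y))
          (𝓝[≠] (0:ℝ)) (𝓝 1) := harc.comp hmul
      have h2 := (tendsto_const_nhds (x := γ * ε)).mul h1
      rw [mul_one] at h2
      apply h2.congr'
      filter_upwards [self_mem_nhdsWithin] with y hy
      simp only [Set.mem_compl_iff, Set.mem_singleton_iff] at hy
      field_simp [hu]
      ring
    have hA' : Filter.Tendsto (fun y : ℝ => y / u y) (𝓝[≠] (0:ℝ)) (𝓝 (1 / (γ * ε))) := by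
      have := hA.inv₀ (by positivity)
      rw [one_div]
      apply this.congr
      intro y
      rw [inv_div]
    have hB : Filter.Tendsto (fun y : ℝ => u y / Real.tan (u y)) (𝓝[≠] (0:ℝ)) (𝓝 1) := by
      have h1 : Filter.Tendsto (fun y : ℝ => Real.tan (u y) / u y) (𝓝[≠] (0:ℝ)) (𝓝 1) :=
        htanlim.comp hu0
      have := h1.inv₀ one_ne_zero
      rw [inv_one] at this
      apply this.congr
      intro y
      rw [inv_div]
    have := hA'.mul hB
    rw [mul_one] at this
    apply this.congr'
    filter_upwards [self_mem_nhdsWithin, hu0.eventually self_mem_nhdsWithin] with y hy huy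
    simp only [Set.mem_compl_iff, Set.mem_singleton_iff] at hy huy
    rw [hdef, if_neg hy]
    rw [div_mul_div_comm, mul_comm (u y) (Real.tan (u y)), mul_div_mul_right _ _ huy]
  -- continuity at interior nonzero points
  have hux_mem : ∀ x ∈ Set.Ioo (-(Tmax * L)) (Tmax * L), u x ∈ Set.Ioo (-(π/2)) (π/2) := by
    intro x hx
    constructor
    · show -(π/2) < γ * Real.arctan (ε * x)
      have : Real.arctan (ε * (-(Tmax * L))) < Real.arctan (ε * x) :=
        Real.arctan_strictMono (by nlinarith [hx.1])
      rw [mul_neg, Real.arctan_neg] at this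
      have := (mul_lt_mul_iff_right₀ hγpos).2 this
      rw [mul_neg, hγa] at this
      linarith
    · show γ * Real.arctan (ε * x) < π/2
      have : Real.arctan (ε * x) < Real.arctan (ε * (Tmax * L)) :=
        Real.arctan_strictMono (by nlinarith [hx.2])
      have := (mul_lt_mul_iff_right₀ hγpos).2 this
      rw [hγa] at this
      exact this
  have hcontx : ∀ x ∈ Set.Ioo (-(Tmax * L)) (Tmax * L), x ≠ 0 → ContinuousAt h x := by
    intro x hx hx0
    have hmem := hux_mem x hx
    have hcos : Real.cos (u x) ≠ 0 := (Real.cos_pos_of_mem_Ioo hmem).ne'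
    have htan0 : Real.tan (u x) ≠ 0 := by
      rcases hx0.lt_or_gt with hneg | hpos
      · have : Real.arctan (ε * x) < 0 := by
          rw [← Real.arctan_zero]; exact Real.arctan_strictMono (by nlinarith)
        have hun : u x < 0 := mul_neg_of_pos_of_neg hγpos this
        exact (Real.tan_neg_of_neg_of_pi_div_two_lt hun hmem.1).ne
      · have : 0 < Real.arctan (ε * x) := by
          rw [← Real.arctan_zero]; exact Real.arctan_strictMono (by nlinarith)
        have hup : 0 < u x := mul_pos hγpos this
        exact (Real.tan_pos_of_pos_of_lt_pi_div_two hup hmem.2).ne'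
    have hc : ContinuousAt (fun y => y / Real.tan (u y)) x := by
      apply ContinuousAt.div continuousAt_id
      · exact (Real.continuousAt_tan.2 hcos).comp hu_cont.continuousAt
      · exact htan0
    apply hc.congr
    filter_upwards [eventually_ne_nhds hx0] with y hy
    rw [hdef, if_neg hy]
  -- continuity within at M
  have hcontM : ContinuousWithinAt h (Set.Iic (Tmax * L)) (Tmax * L) := by
    have hmap : Filter.Tendsto u (𝓝[<] (Tmax * L)) (𝓝[<] (π / 2)) := by
      apply tendsto_nhdsWithin_of_tendsto_nhds_of_eventually_within
      · have huM : u (Tmax * L) = π / 2 := hγa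
        have := hu_cont.tendsto (Tmax * L)
        rw [huM] at this
        exact this.mono_left nhdsWithin_le_nhds
      · filter_upwards [self_mem_nhdsWithin] with y (hy : y < Tmax * L)
        show u y < π / 2
        have : Real.arctan (ε * y) < Real.arctan (ε * (Tmax * L)) :=
          Real.arctan_strictMono (by nlinarith)
        have := (mul_lt_mul_iff_right₀ hγpos).2 this
        rwa [hγa] at this
    have htop : Filter.Tendsto (fun y => Real.tan (u y)) (𝓝[<] (Tmax * L)) atTop :=
      Real.tendsto_tan_pi_div_two.comp hmap
    have hlim : Filter.Tendsto (fun y => y / Real.tan (u y)) (𝓝[<] (Tmax * L)) (𝓝 0) := by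
      have h1 : Filter.Tendsto (fun y : ℝ => y) (𝓝[<] (Tmax * L)) (𝓝 (Tmax * L)) :=
        tendsto_id.mono_left nhdsWithin_le_nhds
      have h2 := tendsto_inv_atTop_zero.comp htop
      have h3 := h1.mul h2
      rw [mul_zero] at h3
      apply h3.congr
      intro y
      rw [div_eq_mul_inv]
      rfl
    unfold ContinuousWithinAt
    rw [hend]
    have hsplit : 𝓝[Set.Iic (Tmax * L)] (Tmax * L)
        = pure (Tmax * L) ⊔ 𝓝[<] (Tmax * L) := by
      rw [← Set.Iio_insert, nhdsWithin_insert]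
    rw [hsplit, tendsto_sup]
    constructor
    · have := tendsto_pure_nhds h (Tmax * L)
      rwa [hend] at this
    · apply hlim.congr'
      have hne : ∀ᶠ y in 𝓝[<] (Tmax * L), y ≠ 0 := by
        apply eventually_nhdsWithin_of_eventually_nhds
        exact eventually_ne_nhds hM.ne'
      filter_upwards [hne] with y hy
      rw [hdef, if_neg hy]
  have hcontM' : ContinuousWithinAt h (Set.Icc (-(Tmax * L)) (Tmax * L)) (-(Tmax * L)) := by
    have hneg : ContinuousWithinAt (h ∘ (fun y : ℝ => -y))
        (Set.Icc (-(Tmax * L)) (Tmax * L)) (-(Tmax * L)) := by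
      apply ContinuousWithinAt.comp (t := Set.Iic (Tmax * L))
      · rw [neg_neg]; exact hcontM
      · exact continuous_neg.continuousWithinAt
      · intro y hy
        simp only [Set.mem_Iic]
        linarith [hy.1]
    apply hneg.congr
    · intro y _
      exact (hEven y).symm
    · exact (hEven (-(Tmax * L))).symm
  refine ⟨?_, hend, hend', ?_⟩
  · intro x hx
    rcases hx.2.eq_or_lt with rfl | hxM
    · exact hcontM.mono Set.Icc_subset_Iic_self
    rcases hx.1.eq_or_lt with heq | hxm
    · rw [← heq]; exact hcontM'
    rcases eq_or_ne x 0 with rfl | hx0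
    · exact hcont0.continuousWithinAt
    · exact (hcontx x ⟨hxm, hxM⟩ hx0).continuousWithinAt
  · intro x hx
    rcases le_or_gt 0 x with hx0 | hx0
    · exact hbound x hx0 hx.2
    · rw [← hEven x]
      exact hbound (-x) (by linarith) (by linarith [hx.1])
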